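/- The map χ : ℂ⁴ → ℂ defined by χ(z₁,z₂,z₃,z₄) := e^{z₁ - conj(z₁)} satisfies: χ(y * z) = χ(y)·χ(z) for all y, z (so χ is a group homomorphism from G = (ℂ⁴,*) to the multiplicative group of nonzero complex numbers), and |χ(z)| = 1 for all z. Moreover χ(γ) = 1 for every γ ∈ Γ_π, while there exists γ ∈ Γ_{π/2} with χ(γ) = -1; in particular χ is identically 1 on Γ_π but not identically 1 on Γ_{π/2}. -/

import Mathlib

/-- The multiplication `*` on `ℂ⁴`. -/
noncomputable def Gmul (y z : ℂ × ℂ × ℂ × ℂ) : ℂ × ℂ × ℂ × ℂ :=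
  (z.1 + y.1,
   Complex.exp (-y.1) * z.2.1 + y.2.1,
   Complex.exp y.1 * z.2.2.1 + y.2.2.1,
   z.2.2.2 + y.2.2.2 + (1 / 2) * Complex.exp y.1 * y.2.1 * z.2.2.1
     - (1 / 2) * Complex.exp (-y.1) * y.2.2.1 * z.2.1)

/-- The set `Γ_μ ⊆ ℂ⁴`. -/
noncomputable def Gamma (P : Matrix (Fin 2) (Fin 2) ℝ) (lam μ : ℝ) :
    Set (ℂ × ℂ × ℂ × ℂ) :=
  { z | ∃ (a b h k : ℤ) (m₁ m₂ : Fin 2 → ℤ),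
      z = (((lam * a : ℝ) : ℂ) + ((μ * b : ℝ) : ℂ) * Complex.I,
           (P.map (Complex.ofReal)).mulVec (fun j => (m₁ j : ℂ) + (m₂ j : ℂ) * Complex.I) 0,
           (P.map (Complex.ofReal)).mulVec (fun j => (m₁ j : ℂ) + (m₂ j : ℂ) * Complex.I) 1,
           (1 / 2 : ℂ) * ((P.det : ℝ) : ℂ) * ((h : ℂ) + (k : ℂ) * Complex.I)) }

/-- The character `χ(z₁,z₂,z₃,z₄) := e^{z₁ - conj(z₁)}`. -/
noncomputable def chi (z : ℂ × ℂ × ℂ × ℂ) : ℂ :=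
  Complex.exp (z.1 - (starRingEnd ℂ) z.1)

/-- `χ` is a homomorphism from `G = (ℂ⁴,*)` to `ℂ*` of modulus one; it is
identically `1` on `Γ_π`, while some `γ ∈ Γ_{π/2}` has `χ(γ) = -1`. -/
theorem stmt7 (A : Matrix (Fin 2) (Fin 2) ℤ) (hA : A.det = 1)
    (lam : ℝ) (hlam : 0 < lam)
    (P : Matrix (Fin 2) (Fin 2) ℝ) (hP : IsUnit P.det)
    (hconj : P * A.map (Int.cast : ℤ → ℝ) * P⁻¹ =
      Matrix.diagonal ![Real.exp (-lam), Real.exp lam]) :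
    (∀ y z : ℂ × ℂ × ℂ × ℂ, chi (Gmul y z) = chi y * chi z) ∧
    (∀ z : ℂ × ℂ × ℂ × ℂ, chi z ≠ 0) ∧
    (∀ z : ℂ × ℂ × ℂ × ℂ, ‖chi z‖ = 1) ∧
    (∀ γ ∈ Gamma P lam Real.pi, chi γ = 1) ∧
    (∃ γ ∈ Gamma P lam (Real.pi / 2), chi γ = -1) := by

  refine ⟨?_, ?_, ?_, ?_, ?_⟩
  · intro y z
    simp only [chi, Gmul, map_add]
    rw [← Complex.exp_add]
    ring_nf
  · intro z
    exact Complex.exp_ne_zero _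
  · intro z
    rw [chi, Complex.norm_exp, Complex.sub_conj]
    simp
  · rintro γ ⟨a, b, h, k, m₁, m₂, rfl⟩
    simp only [chi]
    rw [Complex.sub_conj]
    have him : ((((lam * a : ℝ) : ℂ) + ((Real.pi * b : ℝ) : ℂ) * Complex.I)).im
        = Real.pi * b := by simp
    rw [him]
    have : ((2 * (Real.pi * b) : ℝ) : ℂ) * Complex.I = b * (2 * Real.pi * Complex.I) := by
      push_cast; ring
    rw [this, Complex.exp_int_mul_two_pi_mul_I]
  · refine ⟨(((lam * (0:ℤ) : ℝ) : ℂ) + ((Real.pi / 2 * (1:ℤ) : ℝ) : ℂ) * Complex.I,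
      (P.map (Complex.ofReal)).mulVec (fun j => ((0:ℤ) : ℂ) + ((0:ℤ) : ℂ) * Complex.I) 0,
      (P.map (Complex.ofReal)).mulVec (fun j => ((0:ℤ) : ℂ) + ((0:ℤ) : ℂ) * Complex.I) 1,
      (1 / 2 : ℂ) * ((P.det : ℝ) : ℂ) * (((0:ℤ) : ℂ) + ((0:ℤ) : ℂ) * Complex.I)),
      ⟨0, 1, 0, 0, 0, 0, rfl⟩, ?_⟩
    simp only [chi]
    rw [Complex.sub_conj]
    have him : ((((lam * (0:ℤ) : ℝ) : ℂ) + ((Real.pi / 2 * (1:ℤ) : ℝ) : ℂ) * Complex.I)).im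
        = Real.pi / 2 := by simp
    rw [him]
    have : ((2 * (Real.pi / 2) : ℝ) : ℂ) * Complex.I = Real.pi * Complex.I := by
      push_cast; ring
    rw [this, Complex.exp_pi_mul_I]
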